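/- Let X be an Archimedean partially ordered vector space with generating cone, and let P be a linear projection with P and I - P positive. Then the range of P is a band, i.e. (P(X))^⊥⊥ = P(X), and moreover X = P(X) ⊕ (P(X))^⊥. -/

import Mathlib

/-- Two vectors are disjoint: the upper bounds of {x+y, -x-y} equal those of {x-y, y-x}. -/
def Disj {X : Type*} [AddCommGroup X] [PartialOrder X] (x y : X) : Prop :=
  upperBounds ({x + y, -x - y} : Set X) = upperBounds ({x - y, y - x} : Set X)


/-- The disjoint complement of a set. -/
def DisjComp {X : Type*} [AddCommGroup X] [PartialOrder X] (S : Set X) : Set X :=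
  {x | ∀ y ∈ S, Disj x y}

/-- The ordered scalar multiplication class as it stood in Mathlib (Dec 2024), since removed. -/
class OrderedSMul (R M : Type*) [Semiring R] [PartialOrder R] [AddCommMonoid M] [PartialOrder M]
    [SMulWithZero R M] : Prop where
  protected smul_lt_smul_of_pos : ∀ {a b : M}, ∀ {c : R}, a < b → 0 < c → c • a < c • b
  protected lt_of_smul_lt_smul_of_pos : ∀ {a b : M}, ∀ {c : R}, c • a < c • b → 0 < c → a < b

lemma mem_ub_pair {X : Type*} [Preorder X] {a b z : X} :
    z ∈ upperBounds ({a, b} : Set X) ↔ a ≤ z ∧ b ≤ z := by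
  constructor
  · intro h
    exact ⟨h (Set.mem_insert _ _), h (Set.mem_insert_of_mem _ rfl)⟩
  · rintro ⟨h1, h2⟩ c hc
    rcases hc with rfl | hc
    · exact h1
    · rcases hc with rfl
      exact h2

lemma disj_symm {X : Type*} [AddCommGroup X] [PartialOrder X] {u v : X}
    (h : Disj u v) : Disj v u := by
  unfold Disj at h ⊢
  have h1 : v + u = u + v := add_comm _ _
  have h2 : -v - u = -u - v := by abel
  rw [h1, h2, Set.pair_comm (v - u) (u - v)]
  exact h

/-- Key lemma A: an element of the range of `P` is disjoint from an element of the kernel. -/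
lemma disjA {X : Type*} [AddCommGroup X] [PartialOrder X]
    [IsOrderedAddMonoid X] [Module ℝ X]
    (P : X →ₗ[ℝ] X)
    (hPpos : ∀ x : X, 0 ≤ x → 0 ≤ P x)
    (hQpos : ∀ x : X, 0 ≤ x → 0 ≤ x - P x)
    {u v : X} (hu : P u = u) (hv : P v = 0) : Disj u v := by
  unfold Disj
  ext z
  rw [mem_ub_pair, mem_ub_pair]
  constructor
  · rintro ⟨h1, h2⟩
    have p1 : (0 : X) ≤ P z - u := by
      have h := hPpos _ (sub_nonneg.mpr h1)
      simp only [map_sub, map_add, map_neg, hu, hv] at h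
      exact le_of_le_of_eq h (by abel)
    have q1 : (0 : X) ≤ z - v - P z := by
      have h := hQpos _ (sub_nonneg.mpr h1)
      simp only [map_sub, map_add, map_neg, hu, hv] at h
      exact le_of_le_of_eq h (by abel)
    have p2 : (0 : X) ≤ P z + u := by
      have h := hPpos _ (sub_nonneg.mpr h2)
      simp only [map_sub, map_add, map_neg, hu, hv] at h
      exact le_of_le_of_eq h (by abel)
    have q2 : (0 : X) ≤ z + v - P z := by
      have h := hQpos _ (sub_nonneg.mpr h2)
      simp only [map_sub, map_add, map_neg, hu, hv] at h
      exact le_of_le_of_eq h (by abel)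
    constructor
    · rw [← sub_nonneg]
      exact le_of_le_of_eq (add_nonneg p1 q2) (by abel)
    · rw [← sub_nonneg]
      exact le_of_le_of_eq (add_nonneg p2 q1) (by abel)
  · rintro ⟨h1, h2⟩
    have p1 : (0 : X) ≤ P z - u := by
      have h := hPpos _ (sub_nonneg.mpr h1)
      simp only [map_sub, map_add, map_neg, hu, hv] at h
      exact le_of_le_of_eq h (by abel)
    have q1 : (0 : X) ≤ z + v - P z := by
      have h := hQpos _ (sub_nonneg.mpr h1)
      simp only [map_sub, map_add, map_neg, hu, hv] at h
      exact le_of_le_of_eq h (by abel)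
    have p2 : (0 : X) ≤ P z + u := by
      have h := hPpos _ (sub_nonneg.mpr h2)
      simp only [map_sub, map_add, map_neg, hu, hv] at h
      exact le_of_le_of_eq h (by abel)
    have q2 : (0 : X) ≤ z - v - P z := by
      have h := hQpos _ (sub_nonneg.mpr h2)
      simp only [map_sub, map_add, map_neg, hu, hv] at h
      exact le_of_le_of_eq h (by abel)
    constructor
    · rw [← sub_nonneg]
      exact le_of_le_of_eq (add_nonneg p1 q2) (by abel)
    · rw [← sub_nonneg]
      exact le_of_le_of_eq (add_nonneg p2 q1) (by abel)

/-- Key lemma B: if `x` is disjoint from `P x`, then `P x = 0`. -/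
lemma projB {X : Type*} [AddCommGroup X] [PartialOrder X]
    [IsOrderedAddMonoid X] [Module ℝ X]
    (P : X →ₗ[ℝ] X) (hPP : ∀ x : X, P (P x) = P x)
    (hPpos : ∀ x : X, 0 ≤ x → 0 ≤ P x)
    (hQpos : ∀ x : X, 0 ≤ x → 0 ≤ x - P x)
    (hgen : ∀ x : X, ∃ a b : X, 0 ≤ a ∧ 0 ≤ b ∧ x = a - b)
    {x : X} (hx : Disj x (P x)) : P x = 0 := by
  obtain ⟨a, b, ha, hb, hab⟩ := hgen (x - P x)
  set z := a + b with hz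
  have hz1 : x - P x ≤ z := by
    rw [← sub_nonneg]
    have : z - (x - P x) = b + b := by rw [hab, hz]; abel
    rw [this]
    exact add_nonneg hb hb
  have hz2 : P x - x ≤ z := by
    rw [← sub_nonneg]
    have : z - (P x - x) = a + a := by
      rw [hz, show P x - x = -(x - P x) by abel, hab]; abel
    rw [this]
    exact add_nonneg ha ha
  -- w = z - P z is also an upper bound of {x - P x, P x - x}
  set w := z - P z with hw
  have hw1 : x - P x ≤ w := by
    rw [← sub_nonneg]
    have h := hQpos _ (sub_nonneg.mpr hz1)
    simp only [map_sub, hPP] at h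
    exact le_of_le_of_eq h (by rw [hw]; abel)
  have hw2 : P x - x ≤ w := by
    rw [← sub_nonneg]
    have h := hQpos _ (sub_nonneg.mpr hz2)
    simp only [map_sub, hPP] at h
    exact le_of_le_of_eq h (by rw [hw]; abel)
  -- hence w is an upper bound of {x + P x, -x - P x}
  have hwub : w ∈ upperBounds ({x + P x, -x - P x} : Set X) := by
    rw [hx, mem_ub_pair]
    exact ⟨hw1, hw2⟩
  rw [mem_ub_pair] at hwub
  obtain ⟨k1, k2⟩ := hwub
  have hPw : P w = 0 := by
    rw [hw, map_sub, hPP, sub_self]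
  -- apply P to w - (x + P x) ≥ 0 and w + x + P x ≥ 0
  have e1 : (0 : X) ≤ -(P x + P x) := by
    have h := hPpos _ (sub_nonneg.mpr k1)
    simp only [map_sub, map_add, hPP, hPw] at h
    exact le_of_le_of_eq h (by abel)
  have e2 : (0 : X) ≤ P x + P x := by
    have h := hPpos _ (sub_nonneg.mpr k2)
    simp only [map_sub, map_add, map_neg, hPP, hPw] at h
    exact le_of_le_of_eq h (by abel)
  have h2 : P x + P x = 0 := le_antisymm (by rwa [← neg_nonneg]) e2
  have h2' : (2 : ℝ) • P x = 0 := by rw [two_smul]; exact h2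
  have : P x = (2 : ℝ)⁻¹ • ((2 : ℝ) • P x) := by
    rw [smul_smul]
    norm_num
  rw [this, h2', smul_zero]

/-- The disjoint complement of the range of a positive projection with positive complement
is exactly the kernel. -/
lemma disjComp_range {X : Type*} [AddCommGroup X] [PartialOrder X]
    [IsOrderedAddMonoid X] [Module ℝ X]
    (P : X →ₗ[ℝ] X) (hPP : ∀ x : X, P (P x) = P x)
    (hPpos : ∀ x : X, 0 ≤ x → 0 ≤ P x)
    (hQpos : ∀ x : X, 0 ≤ x → 0 ≤ x - P x)
    (hgen : ∀ x : X, ∃ a b : X, 0 ≤ a ∧ 0 ≤ b ∧ x = a - b) :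
    DisjComp (Set.range P) = {y : X | P y = 0} := by
  ext y
  constructor
  · intro hy
    exact projB P hPP hPpos hQpos hgen (hy (P y) ⟨y, rfl⟩)
  · rintro hy u ⟨c, rfl⟩
    exact disj_symm (disjA P hPpos hQpos (hPP c) hy)

theorem range_is_projection_band {X : Type*} [AddCommGroup X] [PartialOrder X]
    [IsOrderedAddMonoid X] [Module ℝ X]
    [OrderedSMul ℝ X]
    (harch : ∀ x y : X, (∀ n : ℕ, 0 < n → n • x ≤ y) → x ≤ 0)
    (hgen : ∀ x : X, ∃ a b : X, 0 ≤ a ∧ 0 ≤ b ∧ x = a - b)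
    (P : X →ₗ[ℝ] X) (hP : P ∘ₗ P = P)
    (hPpos : ∀ x : X, 0 ≤ x → 0 ≤ P x)
    (hQpos : ∀ x : X, 0 ≤ x → 0 ≤ x - P x) :
    DisjComp (DisjComp (Set.range P)) = Set.range P ∧
    (∀ x : X, ∃ a ∈ Set.range P, ∃ b ∈ DisjComp (Set.range P), x = a + b) ∧
    Set.range P ∩ DisjComp (Set.range P) = {0} := by
  have hPP : ∀ x : X, P (P x) = P x := fun x => by
    rw [← LinearMap.comp_apply, hP]
  -- the complementary projection
  set Q : X →ₗ[ℝ] X := LinearMap.id - P with hQ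
  have hQapp : ∀ x : X, Q x = x - P x := fun x => by
    rw [hQ, LinearMap.sub_apply, LinearMap.id_apply]
  have hQQ : ∀ x : X, Q (Q x) = Q x := fun x => by
    rw [hQapp, hQapp, map_sub, hPP, sub_self, sub_zero]
  have hQpos' : ∀ x : X, 0 ≤ x → 0 ≤ Q x := fun x hx => by
    rw [hQapp]; exact hQpos x hx
  have hPpos' : ∀ x : X, 0 ≤ x → 0 ≤ x - Q x := fun x hx => by
    rw [hQapp]
    have : x - (x - P x) = P x := by abel
    rw [this]
    exact hPpos x hx
  have hker : DisjComp (Set.range P) = {y : X | P y = 0} :=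
    disjComp_range P hPP hPpos hQpos hgen
  have hkerQ : DisjComp (Set.range Q) = {y : X | Q y = 0} :=
    disjComp_range Q hQQ hQpos' hPpos' hgen
  have hrangeQ : ({y : X | P y = 0} : Set X) = Set.range Q := by
    ext y
    constructor
    · intro hy
      exact ⟨y, by rw [hQapp, hy, sub_zero]⟩
    · rintro ⟨c, rfl⟩
      simp only [Set.mem_setOf_eq]
      rw [hQapp, map_sub, hPP, sub_self]
  refine ⟨?_, ?_, ?_⟩
  · rw [hker, hrangeQ, hkerQ]
    ext y
    constructor
    · intro hy
      simp only [Set.mem_setOf_eq, hQapp, sub_eq_zero] at hy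
      exact ⟨y, hy.symm⟩
    · rintro ⟨c, rfl⟩
      simp only [Set.mem_setOf_eq]
      rw [hQapp, hPP, sub_self]
  · intro x
    refine ⟨P x, ⟨x, rfl⟩, x - P x, ?_, by abel⟩
    rw [hker]
    simp only [Set.mem_setOf_eq]
    rw [map_sub, hPP, sub_self]
  · ext y
    simp only [Set.mem_inter_iff, Set.mem_singleton_iff, hker]
    constructor
    · rintro ⟨⟨c, rfl⟩, hy2⟩
      simp only [Set.mem_setOf_eq] at hy2
      rw [← hPP c, hy2]
    · rintro rfl
      exact ⟨⟨0, map_zero P⟩, by simp [Set.mem_setOf_eq]⟩
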